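/- Let K be a field, K̄ an algebraic closure, and G ≤ K̄^× with G^n ⊆ K^× where n is coprime to char(K). If μ_n(GK^×) = μ_n(K^×), then the exponentiation-by-n map induces an isomorphism GK^×/K^× ≅ G^n K^{×n}/K^{×n}. -/

import Mathlib

open Subgroup

noncomputable section

/-- The multiplicative group `K^×` viewed inside `K̄^×`. -/
def KX (K Kbar : Type*) [Field K] [Field Kbar] [Algebra K Kbar] : Subgroup Kbarˣ :=
  (Units.map (algebraMap K Kbar).toMonoidHom).range

variable (K : Type*) {Kbar : Type*} [Field K] [Field Kbar] [Algebra K Kbar]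

/-- The `n`-th power map `GK^× → G^n K^{×n}` on subgroups of `K̄^×`. -/
def powHom (G : Subgroup Kbarˣ) (n : ℕ) :
    ↥(G ⊔ KX K Kbar) →* ↥(G.map (powMonoidHom n) ⊔ (KX K Kbar).map (powMonoidHom n)) :=
  ((powMonoidHom n).domRestrict (G ⊔ KX K Kbar)).codRestrict _
    (fun a => by
      have h := Subgroup.mem_map_of_mem (powMonoidHom n) a.2
      rw [Subgroup.map_sup] at h
      exact h)

/-- The map `GK^×/K^× → G^n K^{×n}/K^{×n}` induced by raising to the `n`-th power. -/
def powQuotMap (G : Subgroup Kbarˣ) (n : ℕ) :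
    (↥(G ⊔ KX K Kbar) ⧸ ((KX K Kbar).subgroupOf (G ⊔ KX K Kbar))) →*
    (↥(G.map (powMonoidHom n) ⊔ (KX K Kbar).map (powMonoidHom n)) ⧸
      (((KX K Kbar).map (powMonoidHom n)).subgroupOf
        (G.map (powMonoidHom n) ⊔ (KX K Kbar).map (powMonoidHom n)))) :=
  QuotientGroup.map _ _ (powHom K G n)
    (fun a ha => by
      rw [Subgroup.mem_comap, Subgroup.mem_subgroupOf]
      exact Subgroup.mem_map_of_mem (powMonoidHom n) (Subgroup.mem_subgroupOf.mp ha))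

/-- If `μ_n(GK^×) = μ_n(K^×)`, then exponentiation by `n` induces an isomorphism
`GK^×/K^× ≅ G^n K^{×n}/K^{×n}`. -/
theorem stmt2 [IsAlgClosure K Kbar] (G : Subgroup Kbarˣ) (n : ℕ) (hn : 0 < n)
    (hchar : (n : K) ≠ 0)
    (hG : G.map (powMonoidHom n) ≤ KX K Kbar)
    (hmu : (powMonoidHom n).ker ⊓ (G ⊔ KX K Kbar) = (powMonoidHom n).ker ⊓ KX K Kbar) :
    Function.Bijective (powQuotMap K G n) := by
  have key : ∀ z : Kbarˣ, z ∈ G ⊔ KX K Kbar →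
      z ^ n ∈ (KX K Kbar).map (powMonoidHom n) → z ∈ KX K Kbar := by
    intro z hz hzn
    obtain ⟨k, hk, hkz⟩ := hzn
    have hker : z * k⁻¹ ∈ (powMonoidHom n).ker ⊓ (G ⊔ KX K Kbar) := by
      rw [Subgroup.mem_inf]
      refine ⟨?_, mul_mem hz (Subgroup.inv_mem _ (Subgroup.mem_sup_right hk))⟩
      rw [MonoidHom.mem_ker, powMonoidHom_apply, mul_pow, inv_pow,
        show (k : Kbarˣ) ^ n = z ^ n from hkz]
      group
    rw [hmu] at hker
    have := mul_mem hker.2 hk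
    simpa using this
  constructor
  · intro a b hab
    induction a using QuotientGroup.induction_on with | H x =>
    induction b using QuotientGroup.induction_on with | H y =>
    simp only [powQuotMap, QuotientGroup.map_mk] at hab
    rw [QuotientGroup.eq] at hab ⊢
    rw [Subgroup.mem_subgroupOf] at hab ⊢
    have hcoe : ((((powHom K G n) x)⁻¹ * (powHom K G n) y : _) : Kbarˣ)
        = ((x : Kbarˣ)⁻¹ * y) ^ n := by
      simp [powHom, MonoidHom.restrict, MonoidHom.codRestrict, mul_pow, inv_pow]
    rw [hcoe] at hab
    exact key _ ((x⁻¹ * y : ↥(G ⊔ KX K Kbar)).2) hab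
  · intro b
    induction b using QuotientGroup.induction_on with | H y =>
    have hy : (y : Kbarˣ) ∈ (G ⊔ KX K Kbar).map (powMonoidHom n) := by
      rw [Subgroup.map_sup]; exact y.2
    obtain ⟨x, hx, hxy⟩ := hy
    refine ⟨QuotientGroup.mk ⟨x, hx⟩, ?_⟩
    simp only [powQuotMap, QuotientGroup.map_mk]
    congr 1
    ext
    simpa [powHom, MonoidHom.restrict, MonoidHom.codRestrict] using congrArg Units.val hxy

end
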